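/- Every element of SL(2,ℂ) induces a proper orthochronous Lorentz transformation: for every 2×2 complex matrix A with det A = 1 there exists a real 4×4 matrix L with Lᵀ·η·L = η, det L = 1 and L₀₀ ≥ 1, such that for all x : Fin 4 → ℝ, A·X(x)·Aᴴ = X(L·x), where L·x denotes the matrix-vector product. -/

import Mathlib

open Matrix

/-- The Minkowski metric matrix η = diag(1, −1, −1, −1). -/
def minkowski : Matrix (Fin 4) (Fin 4) ℝ := Matrix.diagonal ![1, -1, -1, -1]

/-- The Hermitian 2×2 matrix `X(x) = x₀·𝟙 − x₁·σ₁ − x₂·σ₂ − x₃·σ₃` associated to a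
four-vector `x`. -/
def minkMat (x : Fin 4 → ℝ) : Matrix (Fin 2) (Fin 2) ℂ :=
  !![((x 0 : ℝ) : ℂ) - ((x 3 : ℝ) : ℂ), -((x 1 : ℝ) : ℂ) + Complex.I * ((x 2 : ℝ) : ℂ);
     -((x 1 : ℝ) : ℂ) - Complex.I * ((x 2 : ℝ) : ℂ), ((x 0 : ℝ) : ℂ) + ((x 3 : ℝ) : ℂ)]

/-- Explicit expansion of a 4×4 determinant. -/
theorem det4aux {R : Type*} [CommRing R]
    (m00 m01 m02 m03 m10 m11 m12 m13 m20 m21 m22 m23 m30 m31 m32 m33 : R) :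
    (!![m00,m01,m02,m03; m10,m11,m12,m13; m20,m21,m22,m23; m30,m31,m32,m33]).det =
      m00*(m11*(m22*m33-m23*m32) - m12*(m21*m33-m23*m31) + m13*(m21*m32-m22*m31))
    - m01*(m10*(m22*m33-m23*m32) - m12*(m20*m33-m23*m30) + m13*(m20*m32-m22*m30))
    + m02*(m10*(m21*m33-m23*m31) - m11*(m20*m33-m23*m30) + m13*(m20*m31-m21*m30))
    - m03*(m10*(m21*m32-m22*m31) - m11*(m20*m32-m22*m30) + m12*(m20*m31-m21*m30)) := by
  simp [Matrix.det_succ_row_zero, Fin.sum_univ_succ]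
  simp (config := {decide := true}) [Fin.succAbove]
  ring

set_option maxHeartbeats 4000000 in
set_option maxRecDepth 8000 in
/-- every `A ∈ SL(2,ℂ)` induces a proper orthochronous Lorentz transformation
`L`, i.e. `Lᵀ·η·L = η`, `det L = 1`, `L₀₀ ≥ 1`, with `A·X(x)·Aᴴ = X(L·x)` for all `x`. -/
theorem stmt18 (A : Matrix (Fin 2) (Fin 2) ℂ) (hA : A.det = 1) :
    ∃ L : Matrix (Fin 4) (Fin 4) ℝ,
      Lᵀ * minkowski * L = minkowski ∧
      L.det = 1 ∧
      1 ≤ L 0 0 ∧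
      ∀ x : Fin 4 → ℝ, A * minkMat x * Aᴴ = minkMat (L.mulVec x) := by
  set a1 := (A 0 0).re with ha1; set a2 := (A 0 0).im with ha2
  set b1 := (A 0 1).re with hb1; set b2 := (A 0 1).im with hb2
  set c1 := (A 1 0).re with hc1; set c2 := (A 1 0).im with hc2
  set d1 := (A 1 1).re with hd1; set d2 := (A 1 1).im with hd2
  rw [Matrix.det_fin_two] at hA
  have hre := congrArg Complex.re hA
  have him := congrArg Complex.im hA
  simp [Complex.mul_re, Complex.mul_im] at hre him
  have hp : a1*d1 - a2*d2 - b1*c1 + b2*c2 = 1 := by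
    rw [← ha1, ← ha2, ← hb1, ← hb2, ← hc1, ← hc2, ← hd1, ← hd2] at hre; linarith
  have hq : a1*d2 + a2*d1 - b1*c2 - b2*c1 = 0 := by
    rw [← ha1, ← ha2, ← hb1, ← hb2, ← hc1, ← hc2, ← hd1, ← hd2] at him; linarith
  have hPQ : (a1*d1 - a2*d2 - b1*c1 + b2*c2)^2 + (a1*d2 + a2*d1 - b1*c2 - b2*c1)^2 = 1 := by
    rw [hp, hq]; norm_num
  have hA00 : A 0 0 = (a1 : ℂ) + a2 * Complex.I := (Complex.re_add_im _).symm
  have hA01 : A 0 1 = (b1 : ℂ) + b2 * Complex.I := (Complex.re_add_im _).symm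
  have hA10 : A 1 0 = (c1 : ℂ) + c2 * Complex.I := (Complex.re_add_im _).symm
  have hA11 : A 1 1 = (d1 : ℂ) + d2 * Complex.I := (Complex.re_add_im _).symm
  refine ⟨!![((1/2)*d2^2 + (1/2)*d1^2 + (1/2)*c2^2 + (1/2)*c1^2 + (1/2)*b2^2 + (1/2)*b1^2 + (1/2)*a2^2 + (1/2)*a1^2), (-c2*d2 - c1*d1 - a2*b2 - a1*b1), (-c2*d1 + c1*d2 - a2*b1 + a1*b2), ((1/2)*d2^2 + (1/2)*d1^2 + (-1/2)*c2^2 + (-1/2)*c1^2 + (1/2)*b2^2 + (1/2)*b1^2 + (-1/2)*a2^2 + (-1/2)*a1^2);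
       (-b2*d2 - b1*d1 - a2*c2 - a1*c1), (b2*c2 + b1*c1 + a2*d2 + a1*d1), (-b2*c1 + b1*c2 + a2*d1 - a1*d2), (-b2*d2 - b1*d1 + a2*c2 + a1*c1);
       (b2*d1 - b1*d2 + a2*c1 - a1*c2), (-b2*c1 + b1*c2 - a2*d1 + a1*d2), (-b2*c2 - b1*c1 + a2*d2 + a1*d1), (b2*d1 - b1*d2 - a2*c1 + a1*c2);
       ((1/2)*d2^2 + (1/2)*d1^2 + (1/2)*c2^2 + (1/2)*c1^2 + (-1/2)*b2^2 + (-1/2)*b1^2 + (-1/2)*a2^2 + (-1/2)*a1^2), (-c2*d2 - c1*d1 + a2*b2 + a1*b1), (-c2*d1 + c1*d2 + a2*b1 - a1*b2), ((1/2)*d2^2 + (1/2)*d1^2 + (-1/2)*c2^2 + (-1/2)*c1^2 + (-1/2)*b2^2 + (-1/2)*b1^2 + (1/2)*a2^2 + (1/2)*a1^2)], ?_, ?_, ?_, ?_⟩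
  · have hD : minkowski = !![1,0,0,0; 0,-1,0,0; 0,0,-1,0; 0,0,0,-1] := by
      ext i j; fin_cases i <;> fin_cases j <;> rfl
    have hT : (!![((1/2)*d2^2 + (1/2)*d1^2 + (1/2)*c2^2 + (1/2)*c1^2 + (1/2)*b2^2 + (1/2)*b1^2 + (1/2)*a2^2 + (1/2)*a1^2), (-c2*d2 - c1*d1 - a2*b2 - a1*b1), (-c2*d1 + c1*d2 - a2*b1 + a1*b2), ((1/2)*d2^2 + (1/2)*d1^2 + (-1/2)*c2^2 + (-1/2)*c1^2 + (1/2)*b2^2 + (1/2)*b1^2 + (-1/2)*a2^2 + (-1/2)*a1^2);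
       (-b2*d2 - b1*d1 - a2*c2 - a1*c1), (b2*c2 + b1*c1 + a2*d2 + a1*d1), (-b2*c1 + b1*c2 + a2*d1 - a1*d2), (-b2*d2 - b1*d1 + a2*c2 + a1*c1);
       (b2*d1 - b1*d2 + a2*c1 - a1*c2), (-b2*c1 + b1*c2 - a2*d1 + a1*d2), (-b2*c2 - b1*c1 + a2*d2 + a1*d1), (b2*d1 - b1*d2 - a2*c1 + a1*c2);
       ((1/2)*d2^2 + (1/2)*d1^2 + (1/2)*c2^2 + (1/2)*c1^2 + (-1/2)*b2^2 + (-1/2)*b1^2 + (-1/2)*a2^2 + (-1/2)*a1^2), (-c2*d2 - c1*d1 + a2*b2 + a1*b1), (-c2*d1 + c1*d2 + a2*b1 - a1*b2), ((1/2)*d2^2 + (1/2)*d1^2 + (-1/2)*c2^2 + (-1/2)*c1^2 + (-1/2)*b2^2 + (-1/2)*b1^2 + (1/2)*a2^2 + (1/2)*a1^2)] : Matrix (Fin 4) (Fin 4) ℝ)ᵀ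
        = !![((1/2)*d2^2 + (1/2)*d1^2 + (1/2)*c2^2 + (1/2)*c1^2 + (1/2)*b2^2 + (1/2)*b1^2 + (1/2)*a2^2 + (1/2)*a1^2), (-b2*d2 - b1*d1 - a2*c2 - a1*c1), (b2*d1 - b1*d2 + a2*c1 - a1*c2), ((1/2)*d2^2 + (1/2)*d1^2 + (1/2)*c2^2 + (1/2)*c1^2 + (-1/2)*b2^2 + (-1/2)*b1^2 + (-1/2)*a2^2 + (-1/2)*a1^2);
         (-c2*d2 - c1*d1 - a2*b2 - a1*b1), (b2*c2 + b1*c1 + a2*d2 + a1*d1), (-b2*c1 + b1*c2 - a2*d1 + a1*d2), (-c2*d2 - c1*d1 + a2*b2 + a1*b1);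
         (-c2*d1 + c1*d2 - a2*b1 + a1*b2), (-b2*c1 + b1*c2 + a2*d1 - a1*d2), (-b2*c2 - b1*c1 + a2*d2 + a1*d1), (-c2*d1 + c1*d2 + a2*b1 - a1*b2);
         ((1/2)*d2^2 + (1/2)*d1^2 + (-1/2)*c2^2 + (-1/2)*c1^2 + (1/2)*b2^2 + (1/2)*b1^2 + (-1/2)*a2^2 + (-1/2)*a1^2), (-b2*d2 - b1*d1 + a2*c2 + a1*c1), (b2*d1 - b1*d2 - a2*c1 + a1*c2), ((1/2)*d2^2 + (1/2)*d1^2 + (-1/2)*c2^2 + (-1/2)*c1^2 + (-1/2)*b2^2 + (-1/2)*b1^2 + (1/2)*a2^2 + (1/2)*a1^2)] := by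
      ext i j; fin_cases i <;> fin_cases j <;> rfl
    rw [hT, hD]
    ext i j
    fin_cases i <;> fin_cases j <;>
      simp [Matrix.mul_apply, Fin.sum_univ_four, Matrix.of_apply, Matrix.vecHead, Matrix.vecTail] <;>
      first
        | linear_combination hPQ
        | linear_combination -hPQ
        | linear_combination 2*hPQ
        | linear_combination -2*hPQ
        | ring1
  · rw [det4aux]
    first
      | linear_combination ((a1*d1 - a2*d2 - b1*c1 + b2*c2)^2 + (a1*d2 + a2*d1 - b1*c2 - b2*c1)^2 + 1)*hPQ
      | linear_combination (-((a1*d1 - a2*d2 - b1*c1 + b2*c2)^2 + (a1*d2 + a2*d1 - b1*c2 - b2*c1)^2 + 1))*hPQ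
      | ring1
  · show (1:ℝ) ≤ (1/2)*d2^2 + (1/2)*d1^2 + (1/2)*c2^2 + (1/2)*c1^2 + (1/2)*b2^2 + (1/2)*b1^2 + (1/2)*a2^2 + (1/2)*a1^2
    nlinarith [sq_nonneg (a1-d1), sq_nonneg (a2+d2), sq_nonneg (b1+c1), sq_nonneg (b2-c2)]
  · intro x
    have hv : (!![((1/2)*d2^2 + (1/2)*d1^2 + (1/2)*c2^2 + (1/2)*c1^2 + (1/2)*b2^2 + (1/2)*b1^2 + (1/2)*a2^2 + (1/2)*a1^2), (-c2*d2 - c1*d1 - a2*b2 - a1*b1), (-c2*d1 + c1*d2 - a2*b1 + a1*b2), ((1/2)*d2^2 + (1/2)*d1^2 + (-1/2)*c2^2 + (-1/2)*c1^2 + (1/2)*b2^2 + (1/2)*b1^2 + (-1/2)*a2^2 + (-1/2)*a1^2);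
       (-b2*d2 - b1*d1 - a2*c2 - a1*c1), (b2*c2 + b1*c1 + a2*d2 + a1*d1), (-b2*c1 + b1*c2 + a2*d1 - a1*d2), (-b2*d2 - b1*d1 + a2*c2 + a1*c1);
       (b2*d1 - b1*d2 + a2*c1 - a1*c2), (-b2*c1 + b1*c2 - a2*d1 + a1*d2), (-b2*c2 - b1*c1 + a2*d2 + a1*d1), (b2*d1 - b1*d2 - a2*c1 + a1*c2);
       ((1/2)*d2^2 + (1/2)*d1^2 + (1/2)*c2^2 + (1/2)*c1^2 + (-1/2)*b2^2 + (-1/2)*b1^2 + (-1/2)*a2^2 + (-1/2)*a1^2), (-c2*d2 - c1*d1 + a2*b2 + a1*b1), (-c2*d1 + c1*d2 + a2*b1 - a1*b2), ((1/2)*d2^2 + (1/2)*d1^2 + (-1/2)*c2^2 + (-1/2)*c1^2 + (-1/2)*b2^2 + (-1/2)*b1^2 + (1/2)*a2^2 + (1/2)*a1^2)] : Matrix (Fin 4) (Fin 4) ℝ).mulVec x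
        = ![((1/2)*d2^2 + (1/2)*d1^2 + (1/2)*c2^2 + (1/2)*c1^2 + (1/2)*b2^2 + (1/2)*b1^2 + (1/2)*a2^2 + (1/2)*a1^2) * x 0 + (-c2*d2 - c1*d1 - a2*b2 - a1*b1) * x 1 + (-c2*d1 + c1*d2 - a2*b1 + a1*b2) * x 2 + ((1/2)*d2^2 + (1/2)*d1^2 + (-1/2)*c2^2 + (-1/2)*c1^2 + (1/2)*b2^2 + (1/2)*b1^2 + (-1/2)*a2^2 + (-1/2)*a1^2) * x 3,
            (-b2*d2 - b1*d1 - a2*c2 - a1*c1) * x 0 + (b2*c2 + b1*c1 + a2*d2 + a1*d1) * x 1 + (-b2*c1 + b1*c2 + a2*d1 - a1*d2) * x 2 + (-b2*d2 - b1*d1 + a2*c2 + a1*c1) * x 3,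
            (b2*d1 - b1*d2 + a2*c1 - a1*c2) * x 0 + (-b2*c1 + b1*c2 - a2*d1 + a1*d2) * x 1 + (-b2*c2 - b1*c1 + a2*d2 + a1*d1) * x 2 + (b2*d1 - b1*d2 - a2*c1 + a1*c2) * x 3,
            ((1/2)*d2^2 + (1/2)*d1^2 + (1/2)*c2^2 + (1/2)*c1^2 + (-1/2)*b2^2 + (-1/2)*b1^2 + (-1/2)*a2^2 + (-1/2)*a1^2) * x 0 + (-c2*d2 - c1*d1 + a2*b2 + a1*b1) * x 1 + (-c2*d1 + c1*d2 + a2*b1 - a1*b2) * x 2 + ((1/2)*d2^2 + (1/2)*d1^2 + (-1/2)*c2^2 + (-1/2)*c1^2 + (-1/2)*b2^2 + (-1/2)*b1^2 + (1/2)*a2^2 + (1/2)*a1^2) * x 3] := by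
      funext k
      fin_cases k <;>
        simp [Matrix.mulVec, dotProduct, Fin.sum_univ_four, Matrix.of_apply,
          Matrix.vecHead, Matrix.vecTail]
    rw [hv]
    ext i j
    fin_cases i <;> fin_cases j
    · simp only [minkMat, Matrix.mul_apply, Fin.sum_univ_two, Fin.mk_zero, Fin.mk_one, Fin.isValue,
        Matrix.conjTranspose_apply, hA00, hA01, hA10, hA11,
        Matrix.cons_val', Matrix.cons_val_zero, Matrix.empty_val', Matrix.cons_val_fin_one,
        Matrix.cons_val_one, Matrix.head_cons, Matrix.head_fin_const, Matrix.cons_val_two,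
        Matrix.cons_val_three, Matrix.tail_cons, Matrix.of_apply, Matrix.vecHead, Matrix.vecTail,
        Function.comp_apply, Matrix.cons_val_succ,
        Complex.star_def, _root_.map_add, _root_.map_mul, _root_.map_sub, _root_.map_neg,
        Complex.conj_ofReal, Complex.conj_I]
      push_cast
      linear_combination (-(b2:ℂ)^2*((x 3 : ℝ) : ℂ) - (b2:ℂ)^2*((x 0 : ℝ) : ℂ) + 2*(a2:ℂ)*(b2:ℂ)*((x 1 : ℝ) : ℂ) + 2*(a2:ℂ)*(b1:ℂ)*((x 2 : ℝ) : ℂ) + (a2:ℂ)^2*((x 3 : ℝ) : ℂ) - (a2:ℂ)^2*((x 0 : ℝ) : ℂ) - 2*(a1:ℂ)*(b2:ℂ)*((x 2 : ℝ) : ℂ)) * Complex.I_sq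
    · simp only [minkMat, Matrix.mul_apply, Fin.sum_univ_two, Fin.mk_zero, Fin.mk_one, Fin.isValue,
        Matrix.conjTranspose_apply, hA00, hA01, hA10, hA11,
        Matrix.cons_val', Matrix.cons_val_zero, Matrix.empty_val', Matrix.cons_val_fin_one,
        Matrix.cons_val_one, Matrix.head_cons, Matrix.head_fin_const, Matrix.cons_val_two,
        Matrix.cons_val_three, Matrix.tail_cons, Matrix.of_apply, Matrix.vecHead, Matrix.vecTail,
        Function.comp_apply, Matrix.cons_val_succ,
        Complex.star_def, _root_.map_add, _root_.map_mul, _root_.map_sub, _root_.map_neg,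
        Complex.conj_ofReal, Complex.conj_I]
      push_cast
      linear_combination (-(b2:ℂ)*(d2:ℂ)*((x 3 : ℝ) : ℂ) - (b2:ℂ)*(d2:ℂ)*((x 0 : ℝ) : ℂ) + (b2:ℂ)*(c2:ℂ)*((x 2 : ℝ) : ℂ)*Complex.I + (b2:ℂ)*(c2:ℂ)*((x 1 : ℝ) : ℂ) - (b2:ℂ)*(c1:ℂ)*((x 2 : ℝ) : ℂ) + (b1:ℂ)*(c2:ℂ)*((x 2 : ℝ) : ℂ) - (a2:ℂ)*(d2:ℂ)*((x 2 : ℝ) : ℂ)*Complex.I + (a2:ℂ)*(d2:ℂ)*((x 1 : ℝ) : ℂ) + (a2:ℂ)*(d1:ℂ)*((x 2 : ℝ) : ℂ) + (a2:ℂ)*(c2:ℂ)*((x 3 : ℝ) : ℂ) - (a2:ℂ)*(c2:ℂ)*((x 0 : ℝ) : ℂ) - (a1:ℂ)*(d2:ℂ)*((x 2 : ℝ) : ℂ)) * Complex.I_sq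
    · simp only [minkMat, Matrix.mul_apply, Fin.sum_univ_two, Fin.mk_zero, Fin.mk_one, Fin.isValue,
        Matrix.conjTranspose_apply, hA00, hA01, hA10, hA11,
        Matrix.cons_val', Matrix.cons_val_zero, Matrix.empty_val', Matrix.cons_val_fin_one,
        Matrix.cons_val_one, Matrix.head_cons, Matrix.head_fin_const, Matrix.cons_val_two,
        Matrix.cons_val_three, Matrix.tail_cons, Matrix.of_apply, Matrix.vecHead, Matrix.vecTail,
        Function.comp_apply, Matrix.cons_val_succ,
        Complex.star_def, _root_.map_add, _root_.map_mul, _root_.map_sub, _root_.map_neg,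
        Complex.conj_ofReal, Complex.conj_I]
      push_cast
      linear_combination (-(b2:ℂ)*(d2:ℂ)*((x 3 : ℝ) : ℂ) - (b2:ℂ)*(d2:ℂ)*((x 0 : ℝ) : ℂ) - (b2:ℂ)*(c2:ℂ)*((x 2 : ℝ) : ℂ)*Complex.I + (b2:ℂ)*(c2:ℂ)*((x 1 : ℝ) : ℂ) - (b2:ℂ)*(c1:ℂ)*((x 2 : ℝ) : ℂ) + (b1:ℂ)*(c2:ℂ)*((x 2 : ℝ) : ℂ) + (a2:ℂ)*(d2:ℂ)*((x 2 : ℝ) : ℂ)*Complex.I + (a2:ℂ)*(d2:ℂ)*((x 1 : ℝ) : ℂ) + (a2:ℂ)*(d1:ℂ)*((x 2 : ℝ) : ℂ) + (a2:ℂ)*(c2:ℂ)*((x 3 : ℝ) : ℂ) - (a2:ℂ)*(c2:ℂ)*((x 0 : ℝ) : ℂ) - (a1:ℂ)*(d2:ℂ)*((x 2 : ℝ) : ℂ)) * Complex.I_sq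
    · simp only [minkMat, Matrix.mul_apply, Fin.sum_univ_two, Fin.mk_zero, Fin.mk_one, Fin.isValue,
        Matrix.conjTranspose_apply, hA00, hA01, hA10, hA11,
        Matrix.cons_val', Matrix.cons_val_zero, Matrix.empty_val', Matrix.cons_val_fin_one,
        Matrix.cons_val_one, Matrix.head_cons, Matrix.head_fin_const, Matrix.cons_val_two,
        Matrix.cons_val_three, Matrix.tail_cons, Matrix.of_apply, Matrix.vecHead, Matrix.vecTail,
        Function.comp_apply, Matrix.cons_val_succ,
        Complex.star_def, _root_.map_add, _root_.map_mul, _root_.map_sub, _root_.map_neg,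
        Complex.conj_ofReal, Complex.conj_I]
      push_cast
      linear_combination (-(d2:ℂ)^2*((x 3 : ℝ) : ℂ) - (d2:ℂ)^2*((x 0 : ℝ) : ℂ) + 2*(c2:ℂ)*(d2:ℂ)*((x 1 : ℝ) : ℂ) + 2*(c2:ℂ)*(d1:ℂ)*((x 2 : ℝ) : ℂ) + (c2:ℂ)^2*((x 3 : ℝ) : ℂ) - (c2:ℂ)^2*((x 0 : ℝ) : ℂ) - 2*(c1:ℂ)*(d2:ℂ)*((x 2 : ℝ) : ℂ)) * Complex.I_sq
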